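/- (Theorem 2, part (ii): characterization of M^{∘∘,0}.) Let S be a martingale with S_0 = 0 and let τ* be the first optimal stopping time. Then M := M* − S belongs to M^{∘∘,0} if and only if, almost surely: S_j = 0 on the event { j ≤ τ* } for every 0 ≤ j ≤ J, and S_j ≤ Y*_j − Z_j + A*_j on the event { τ* < j } for every 0 ≤ j ≤ J. -/

import Mathlib

open MeasureTheory Finset

/-- **Theorem 2, part (ii): characterization of `M^{∘∘,0}`.** Let `S` be a martingale with
`S 0 = 0`, let `τ⋆` be the first optimal stopping time, and set `M := M⋆ − S`. Then `M` is
surely optimal at `0` if and only if, almost surely: `S j = 0` on the event `{j ≤ τ⋆}` for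
every `0 ≤ j ≤ J`, and `S j ≤ Y j − Z j + A⋆ j` on the event `{τ⋆ < j}` for every
`0 ≤ j ≤ J`. -/
theorem mem_surely_optimal_at_zero_iff
    {Ω : Type*} {mΩ : MeasurableSpace Ω} {μ : Measure Ω} [IsProbabilityMeasure μ]
    (J : ℕ) (ℱ : Filtration ℕ mΩ)
    (Z Y Mstar Astar : ℕ → Ω → ℝ)
    (hZ_adapted : Adapted ℱ Z)
    (hZ_int : ∀ j, Integrable (Z j) μ)
    (hYJ : ∀ ω, Y J ω = Z J ω)
    (hY : ∀ j, j < J → ∀ ω, Y j ω = max (Z j ω) ((μ[Y (j + 1) | ℱ j]) ω))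
    (hMstar : ∀ j ω, Mstar j ω =
      ∑ l ∈ Finset.range j, (Y (l + 1) ω - (μ[Y (l + 1) | ℱ l]) ω))
    (hAstar : ∀ j ω, Astar j ω =
      ∑ l ∈ Finset.range j, (Y l ω - (μ[Y (l + 1) | ℱ l]) ω))
    -- the continuation value `C i = E[Y (i+1) | ℱ i]`, with the convention `Y (J+1) := 0`
    (C : ℕ → Ω → ℝ)
    (hC : ∀ i, i < J → C i = μ[Y (i + 1) | ℱ i])
    (hCJ : ∀ ω, C J ω = 0)
    -- the first optimal stopping time `τ⋆ = inf{ i ≥ 0 : Z i ≥ E[Y (i+1) | ℱ i] }`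
    (τs : Ω → ℕ)
    (hτs : ∀ ω, τs ω ≤ J ∧ C (τs ω) ω ≤ Z (τs ω) ω ∧ ∀ i, i < τs ω → Z i ω < C i ω)
    -- the martingale shift `S` and the shifted Doob martingale `M = M⋆ − S`
    (S M : ℕ → Ω → ℝ)
    (hS : Martingale S ℱ μ)
    (hS0 : ∀ ω, S 0 ω = 0)
    (hMdef : ∀ j ω, M j ω = Mstar j ω - S j ω) :
    (∀ᵐ ω ∂μ, Y 0 ω = (Finset.Icc 0 J).sup' (Finset.nonempty_Icc.mpr (Nat.zero_le J))
        (fun r => Z r ω - M r ω))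
    ↔
    (∀ᵐ ω ∂μ,
      (∀ j, j ≤ J → j ≤ τs ω → S j ω = 0)
      ∧ (∀ j, j ≤ J → τs ω < j → S j ω ≤ Y j ω - Z j ω + Astar j ω)) := by
  classical
  -- Doob decomposition identity (pure telescoping)
  have hDoob : ∀ j ω, Mstar j ω - Astar j ω = Y j ω - Y 0 ω := by
    intro j ω
    rw [hMstar, hAstar, ← Finset.sum_sub_distrib]
    have h1 : ∀ l ∈ Finset.range j,
        (Y (l + 1) ω - (μ[Y (l + 1) | ℱ l]) ω) - (Y l ω - (μ[Y (l + 1) | ℱ l]) ω)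
          = Y (l + 1) ω - Y l ω := by intro l _; ring
    rw [Finset.sum_congr rfl h1, Finset.sum_range_sub (fun l => Y l ω)]
  have hterm : ∀ r ω, Z r ω - M r ω
      = Y 0 ω + (S r ω - (Y r ω - Z r ω + Astar r ω)) := by
    intro r ω
    have := hDoob r ω
    rw [hMdef]
    linarith
  -- basic pathwise facts
  have hCle : ∀ l, l < J → ∀ ω, (μ[Y (l + 1) | ℱ l]) ω ≤ Y l ω := by
    intro l hl ω
    rw [hY l hl ω]; exact le_max_right _ _
  have hZle : ∀ r, r ≤ J → ∀ ω, Z r ω ≤ Y r ω := by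
    intro r hr ω
    rcases lt_or_eq_of_le hr with h | h
    · rw [hY r h ω]; exact le_max_left _ _
    · subst h; exact (hYJ ω).ge
  have hAnonneg : ∀ r, r ≤ J → ∀ ω, 0 ≤ Astar r ω := by
    intro r hr ω
    rw [hAstar]
    refine Finset.sum_nonneg fun l hl => ?_
    have hlJ : l < J := lt_of_lt_of_le (Finset.mem_range.mp hl) hr
    have := hCle l hlJ ω
    linarith
  have hAτ : ∀ ω, ∀ j, j ≤ τs ω → Astar j ω = 0 := by
    intro ω j hj
    rw [hAstar]
    refine Finset.sum_eq_zero fun l hl => ?_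
    have hlτ : l < τs ω := lt_of_lt_of_le (Finset.mem_range.mp hl) hj
    have hlJ : l < J := lt_of_lt_of_le hlτ (hτs ω).1
    have h1 : Z l ω < C l ω := (hτs ω).2.2 l hlτ
    have h2 : Y l ω = (μ[Y (l + 1) | ℱ l]) ω := by
      rw [hY l hlJ ω, ← hC l hlJ]
      exact max_eq_right h1.le
    rw [h2]; ring
  have hYτ : ∀ ω, Y (τs ω) ω = Z (τs ω) ω := by
    intro ω
    rcases lt_or_eq_of_le (hτs ω).1 with h | h
    · rw [hY _ h ω, ← hC _ h]
      exact max_eq_left (hτs ω).2.1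
    · rw [h]; exact hYJ ω
  have hgτ : ∀ ω, Y (τs ω) ω - Z (τs ω) ω + Astar (τs ω) ω = 0 := by
    intro ω
    rw [hYτ ω, hAτ ω _ le_rfl]; ring
  constructor
  · -- forward direction
    intro h
    -- (a) a.e., S r ≤ g r for all r ≤ J
    have hA : ∀ᵐ ω ∂μ, ∀ r, r ≤ J → S r ω ≤ Y r ω - Z r ω + Astar r ω := by
      filter_upwards [h] with ω hω r hr
      have hle : Z r ω - M r ω ≤ Y 0 ω := by
        rw [hω]
        exact Finset.le_sup' (fun r => Z r ω - M r ω)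
          (Finset.mem_Icc.mpr ⟨Nat.zero_le _, hr⟩)
      rw [hterm r ω] at hle
      linarith
    -- (b) τs is a stopping time
    have hτchar : ∀ n (ω : Ω), τs ω = n ↔
        (∀ i, i < n → Z i ω < C i ω) ∧ C n ω ≤ Z n ω := by
      intro n ω
      constructor
      · rintro rfl; exact ⟨(hτs ω).2.2, (hτs ω).2.1⟩
      · rintro ⟨h1, h2⟩
        rcases lt_trichotomy (τs ω) n with hlt | heq | hgt
        · exact absurd (hτs ω).2.1 (not_le.mpr (h1 _ hlt))
        · exact heq
        · exact absurd h2 (not_le.mpr ((hτs ω).2.2 n hgt))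
    have hCm : ∀ i, i ≤ J → StronglyMeasurable[ℱ i] (C i) := by
      intro i hi
      rcases lt_or_eq_of_le hi with h | h
      · rw [hC i h]; exact stronglyMeasurable_condExp
      · rw [h, show C J = fun _ => (0 : ℝ) from funext hCJ]
        exact stronglyMeasurable_const
    have hτstop : IsStoppingTime ℱ (fun ω => WithTop.some (τs ω)) := by
      apply isStoppingTime_of_measurableSet_eq
      intro n
      simp only [WithTop.coe_inj]
      rcases le_or_gt n J with hn | hn
      · have hset : {ω | τs ω = n} =
            (⋂ i, ⋂ (_ : i < n), {ω | Z i ω < C i ω}) ∩ {ω | C n ω ≤ Z n ω} := by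
          ext ω
          simp only [Set.mem_setOf_eq, Set.mem_inter_iff, Set.mem_iInter, hτchar n ω]
        rw [hset]
        refine MeasurableSet.inter ?_ ?_
        · refine MeasurableSet.iInter fun i => MeasurableSet.iInter fun hiJ => ?_
          have hZm : StronglyMeasurable[ℱ n] (Z i) :=
            ((hZ_adapted i).mono (ℱ.mono hiJ.le) le_rfl).stronglyMeasurable
          have hCmi : StronglyMeasurable[ℱ n] (C i) :=
            (hCm i (le_trans hiJ.le hn)).mono (ℱ.mono hiJ.le)
          exact hZm.measurableSet_lt hCmi
        · exact StronglyMeasurable.measurableSet_le (hCm n hn) (hZ_adapted n).stronglyMeasurable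
      · have hset : {ω | τs ω = n} = ∅ := by
          ext ω
          simp only [Set.mem_setOf_eq, Set.mem_empty_iff_false, iff_false]
          intro hτ
          exact absurd (hτs ω).1 (by omega)
        rw [hset]; exact @MeasurableSet.empty _ (ℱ n)
    -- (c) the stopped process is a martingale
    have hVsub : Submartingale (stoppedProcess S (fun ω => WithTop.some (τs ω))) ℱ μ :=
      hS.submartingale.stoppedProcess hτstop
    have hVsuper : Supermartingale (stoppedProcess S (fun ω => WithTop.some (τs ω))) ℱ μ := by
      have h1 : Submartingale (stoppedProcess (-S) (fun ω => WithTop.some (τs ω))) ℱ μ :=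
        hS.neg.submartingale.stoppedProcess hτstop
      have h2 : stoppedProcess (-S) (fun ω => WithTop.some (τs ω)) = -(stoppedProcess S (fun ω => WithTop.some (τs ω))) := by
        funext i ω; simp [stoppedProcess]
      rw [h2] at h1
      simpa using h1.neg
    have hVmart : Martingale (stoppedProcess S (fun ω => WithTop.some (τs ω))) ℱ μ :=
      martingale_iff.mpr ⟨hVsuper, hVsub⟩
    have hVJ : ∀ ω, stoppedProcess S (fun ω => WithTop.some (τs ω)) J ω = S (τs ω) ω := by
      intro ω; simp only [stoppedProcess, ← WithTop.coe_min, min_eq_right (hτs ω).1]; rfl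
    have hV0 : ∀ ω, stoppedProcess S (fun ω => WithTop.some (τs ω)) 0 ω = 0 := by
      intro ω; simp [stoppedProcess, hS0]
    -- (d) ∫ V J = 0
    have hintJ : ∫ ω, stoppedProcess S (fun ω => WithTop.some (τs ω)) J ω ∂μ = 0 := by
      have h1 := hVmart.condExp_ae_eq (Nat.zero_le J)
      have h2 : ∫ ω, stoppedProcess S (fun ω => WithTop.some (τs ω)) J ω ∂μ
          = ∫ ω, (μ[stoppedProcess S (fun ω => WithTop.some (τs ω)) J | ℱ 0]) ω ∂μ :=
        (integral_condExp (ℱ.le 0)).symm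
      rw [h2, integral_congr_ae h1]
      simp only [hV0, integral_zero]
    -- (e) S τs ≤ 0 a.e. hence S τs = 0 a.e.
    have hSτ_le : ∀ᵐ ω ∂μ, S (τs ω) ω ≤ 0 := by
      filter_upwards [hA] with ω hω
      have := hω (τs ω) (hτs ω).1
      rw [hgτ ω] at this
      exact this
    have hVJint : Integrable (stoppedProcess S (fun ω => WithTop.some (τs ω)) J) μ := hVmart.integrable J
    have hSτ0 : ∀ᵐ ω ∂μ, S (τs ω) ω = 0 := by
      have hneg : 0 ≤ᵐ[μ] fun ω => -(stoppedProcess S (fun ω => WithTop.some (τs ω)) J ω) := by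
        filter_upwards [hSτ_le] with ω hω
        simp only [Pi.zero_apply, hVJ ω]; linarith
      have hzero : ∫ ω, -(stoppedProcess S (fun ω => WithTop.some (τs ω)) J ω) ∂μ = 0 := by
        rw [integral_neg, hintJ, neg_zero]
      have := (integral_eq_zero_iff_of_nonneg_ae hneg hVJint.neg).mp hzero
      filter_upwards [this] with ω hω
      have h4 : -(stoppedProcess S (fun ω => WithTop.some (τs ω)) J ω) = 0 := hω
      rw [hVJ ω] at h4
      linarith
    -- (f) V j = 0 a.e. for all j
    have hVj : ∀ j, j ≤ J → ∀ᵐ ω ∂μ, S (min j (τs ω)) ω = 0 := by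
      intro j hj
      have h1 := hVmart.condExp_ae_eq hj
      have h2 : stoppedProcess S (fun ω => WithTop.some (τs ω)) J =ᵐ[μ] (0 : Ω → ℝ) := by
        filter_upwards [hSτ0] with ω hω
        rw [hVJ ω, hω]; rfl
      have h3 : μ[stoppedProcess S (fun ω => WithTop.some (τs ω)) J | ℱ j] =ᵐ[μ] (0 : Ω → ℝ) :=
        (condExp_congr_ae h2).trans (by rw [condExp_zero])
      filter_upwards [h1.symm.trans h3] with ω hω
      exact (show S (min j (τs ω)) ω = (0 : Ω → ℝ) ω from hω)
    have hVall : ∀ᵐ ω ∂μ, ∀ j, j ≤ J → S (min j (τs ω)) ω = 0 := by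
      rw [ae_all_iff]
      intro j
      rcases le_or_gt j J with hj | hj
      · filter_upwards [hVj j hj] with ω hω _
        exact hω
      · exact Filter.Eventually.of_forall fun ω hω => absurd hω (by omega)
    filter_upwards [hA, hVall] with ω h1 h2
    refine ⟨fun j hj hjτ => ?_, fun j hj _ => h1 j hj⟩
    have := h2 j hj
    rwa [min_eq_left hjτ] at this
  · -- backward direction: purely pathwise
    intro h
    filter_upwards [h] with ω hω
    obtain ⟨h1, h2⟩ := hω
    have hSg : ∀ r, r ≤ J → S r ω ≤ Y r ω - Z r ω + Astar r ω := by
      intro r hr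
      rcases le_or_gt r (τs ω) with hrτ | hrτ
      · rw [h1 r hr hrτ]
        have := hZle r hr ω
        have := hAnonneg r hr ω
        linarith
      · exact h2 r hr hrτ
    refine le_antisymm ?_ ?_
    · refine Finset.le_sup'_of_le _ (Finset.mem_Icc.mpr ⟨Nat.zero_le _, (hτs ω).1⟩) ?_
      rw [hterm (τs ω) ω, hgτ ω, h1 (τs ω) (hτs ω).1 le_rfl]
      linarith
    · refine Finset.sup'_le _ _ fun r hr => ?_
      rw [hterm r ω]
      have := hSg r (Finset.mem_Icc.mp hr).2
      linarith
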